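/- arXiv:2110.11863 — 2 statements merged into one kernel-verified Lean document; each statement's English description precedes it below -/
import Mathlib

section
/- Let Θ ∈ H^∞(𝕋, B(E)) be a two-sided inner function and let Δ ∈ H^∞(𝕋, B(E)) be a left inner divisor of Θ. Then Δ is an inner divisor of Θ (i.e. both a left and a right inner divisor of Θ) if and only if the function z ↦ Θ(z)Δ(z)* belongs to H^∞(𝕋, B(E)). -/
open MeasureTheory Complex

noncomputable section

/-- Normalized arc-length (Haar) measure on the unit circle `𝕋`, realized as a
measure on `ℂ` supported on the unit circle. -/
def mT : Measure ℂ :=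
  Measure.map (fun t : ℝ => Complex.exp (t * Complex.I))
    ((ENNReal.ofReal (2 * Real.pi))⁻¹ • volume.restrict (Set.Ioc 0 (2 * Real.pi)))

variable {D E E' : Type*}
  [NormedAddCommGroup D] [InnerProductSpace ℂ D] [CompleteSpace D]
  [NormedAddCommGroup E] [InnerProductSpace ℂ E] [CompleteSpace E]
  [NormedAddCommGroup E'] [InnerProductSpace ℂ E'] [CompleteSpace E']

/-- The `n`-th Fourier coefficient `Φ̂(n)x = ∫_𝕋 z̄ⁿ Φ(z)x dm(z)` of an
operator-valued function, applied to the vector `x`. -/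
def fc (Φ : ℂ → D →L[ℂ] E) (n : ℤ) (x : D) : E :=
  ∫ z, ((starRingEnd ℂ) z) ^ n • (Φ z x) ∂mT

/-- Membership in `H^∞(𝕋, B(D,E))`: SOT-measurable, essentially bounded in operator
norm, with vanishing negative Fourier coefficients. -/
structure MemHinf (Φ : ℂ → D →L[ℂ] E) : Prop where
  meas : ∀ x : D, AEStronglyMeasurable (fun z => Φ z x) mT
  bdd : ∃ r : ℝ, ∀ᵐ z ∂mT, ‖Φ z‖ ≤ r
  neg : ∀ n : ℤ, n < 0 → ∀ x : D, fc Φ n x = 0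

/-- An inner function: `Φ ∈ H^∞` with `Φ(z)*Φ(z) = I` a.e. -/
def IsInnerFn (Φ : ℂ → D →L[ℂ] E) : Prop :=
  MemHinf Φ ∧ ∀ᵐ z ∂mT,
    (ContinuousLinearMap.adjoint (Φ z)).comp (Φ z) = ContinuousLinearMap.id ℂ D

/-- A two-sided inner function: inner and `Φ(z)Φ(z)* = I` a.e. -/
def IsTwoSidedInner (Φ : ℂ → D →L[ℂ] E) : Prop :=
  IsInnerFn Φ ∧ ∀ᵐ z ∂mT,
    (Φ z).comp (ContinuousLinearMap.adjoint (Φ z)) = ContinuousLinearMap.id ℂ E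

/-- `Θ` is a left inner divisor of `Φ`: `Θ` is inner and `Φ = Θ A` for some `A ∈ H^∞`. -/
def IsLeftInnerDiv (Θ : ℂ → E' →L[ℂ] E) (Φ : ℂ → D →L[ℂ] E) : Prop :=
  IsInnerFn Θ ∧ ∃ A : ℂ → D →L[ℂ] E', MemHinf A ∧ ∀ᵐ z ∂mT, Φ z = (Θ z).comp (A z)

/-- `Ω` is a right inner divisor of `Φ`: `Ω` is inner and `Φ = B Ω` for some `B ∈ H^∞`. -/
def IsRightInnerDiv (Ω : ℂ → D →L[ℂ] E') (Φ : ℂ → D →L[ℂ] E) : Prop :=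
  IsInnerFn Ω ∧ ∃ B : ℂ → E' →L[ℂ] E, MemHinf B ∧ ∀ᵐ z ∂mT, Φ z = (B z).comp (Ω z)

/-- `Δ` is an inner divisor of `Φ`: both a left and a right inner divisor. -/
def IsInnerDiv (Δ Φ : ℂ → E →L[ℂ] E) : Prop :=
  IsLeftInnerDiv Δ Φ ∧ IsRightInnerDiv Δ Φ

/-- A unitary operator between Hilbert spaces. -/
def IsUnitaryOp (U : D →L[ℂ] E) : Prop :=
  (ContinuousLinearMap.adjoint U).comp U = ContinuousLinearMap.id ℂ D ∧
    U.comp (ContinuousLinearMap.adjoint U) = ContinuousLinearMap.id ℂ E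

/-- An orthogonal projection: idempotent and self-adjoint. -/
def IsOrthoProj (P : E →L[ℂ] E) : Prop :=
  P.comp P = P ∧ ContinuousLinearMap.adjoint P = P

/-- A partial isometry: `T T* T = T`. -/
def IsPartialIsom (T : D →L[ℂ] E) : Prop :=
  (T.comp (ContinuousLinearMap.adjoint T)).comp T = T

/-- The Blaschke factor `b_α(z) = (z - α)/(1 - ᾱ z)`. -/
def blaschke (α z : ℂ) : ℂ := (z - α) / (1 - (starRingEnd ℂ) α * z)

/-- The Poisson integral of `Φ ∈ H^∞` at `ζ ∈ 𝔻`, applied to the vector `x`: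
`P[Φ](ζ)x = Σ_{n ≥ 0} Φ̂(n)x ζⁿ`. -/
def poissonFn (Φ : ℂ → D →L[ℂ] E) (ζ : ℂ) (x : D) : E :=
  ∑' n : ℕ, ζ ^ n • fc Φ (n : ℤ) x

/-- The `n`-th Fourier coefficient of a vector-valued function. -/
def vfc (f : ℂ → E) (n : ℤ) : E :=
  ∫ z, ((starRingEnd ℂ) z) ^ n • f z ∂mT

/-- Membership in `H²(𝕋, E)`: square Bochner-integrable with vanishing
negative Fourier coefficients. -/
def MemH2 (f : ℂ → E) : Prop :=
  MemLp f 2 mT ∧ ∀ n : ℤ, n < 0 → vfc f n = 0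

/-- A finite Blaschke product `θ = ∏ b_{αₙ}` with all `αₙ ∈ 𝔻`. -/
def IsFiniteBlaschkeProd (θ : ℂ → ℂ) : Prop :=
  ∃ (M : ℕ) (α : Fin M → ℂ), (∀ i, ‖α i‖ < 1) ∧ ∀ z, θ z = ∏ i, blaschke (α i) z

/-- `Φ ∈ H^∞(𝕋, B(D,E))` is rational: `θ H²(𝕋,E) ⊆ ker H_{Φ*}` for some finite
Blaschke product `θ`, where `ker H_{Φ*} = {f ∈ H²(𝕋,E) : Φ*f ∈ H²(𝕋,D)}`. -/
def IsRationalFn (Φ : ℂ → D →L[ℂ] E) : Prop :=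
  ∃ θ : ℂ → ℂ, IsFiniteBlaschkeProd θ ∧
    ∀ f : ℂ → E, MemH2 f →
      MemH2 (fun z => θ z • f z) ∧
      MemH2 (fun z => θ z • (ContinuousLinearMap.adjoint (Φ z)) (f z))

/-- A finite Blaschke-Potapov product
`Δ = V ∏ₘ (b_{αₘ} Pₘ + (I - Pₘ))` with `V` a constant unitary, `αₘ ∈ 𝔻` and
`Pₘ` orthogonal projections. -/
def IsBPProduct (Δ : ℂ → E →L[ℂ] E) : Prop :=
  ∃ (M : ℕ) (V : E →L[ℂ] E) (α : Fin M → ℂ) (P : Fin M → E →L[ℂ] E),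
    IsUnitaryOp V ∧ (∀ i, ‖α i‖ < 1) ∧ (∀ i, IsOrthoProj (P i)) ∧
    ∀ᵐ z ∂mT, Δ z = V * (List.ofFn fun i => blaschke (α i) z • P i + (1 - P i)).prod

/-- `Φ` and `Ψ` (with values in operators into the same space `E`) are left coprime:
every common left inner divisor is a constant unitary. -/
def LeftCoprime {D₁ D₂ : Type*}
    [NormedAddCommGroup D₁] [InnerProductSpace ℂ D₁] [CompleteSpace D₁]
    [NormedAddCommGroup D₂] [InnerProductSpace ℂ D₂] [CompleteSpace D₂]
    (Φ : ℂ → D₁ →L[ℂ] E) (Ψ : ℂ → D₂ →L[ℂ] E) : Prop :=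
  ∀ (F : Type) (_ : NormedAddCommGroup F) (_ : InnerProductSpace ℂ F) (_ : CompleteSpace F)
    (Θ : ℂ → F →L[ℂ] E), IsLeftInnerDiv Θ Φ → IsLeftInnerDiv Θ Ψ →
      ∃ U : F →L[ℂ] E, IsUnitaryOp U ∧ ∀ᵐ z ∂mT, Θ z = U


lemma memHinf_congr {Φ Ψ : ℂ → D →L[ℂ] E} (h : ∀ᵐ z ∂mT, Φ z = Ψ z)
    (hΦ : MemHinf Φ) : MemHinf Ψ := by
  refine ⟨fun x => (hΦ.meas x).congr (h.mono fun z hz => by simp only []; rw [hz]), ?_, ?_⟩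
  · obtain ⟨r, hr⟩ := hΦ.bdd
    exact ⟨r, (hr.and h).mono fun z hz => hz.2 ▸ hz.1⟩
  · intro n hn x
    rw [← hΦ.neg n hn x]
    exact (integral_congr_ae (h.mono fun z hz => by rw [hz])).symm

/-- Let `Θ ∈ H^∞(𝕋, B(E))` be two-sided inner and `Δ` a left inner
divisor of `Θ`. Then `Δ` is an inner divisor of `Θ` (both a left and a right inner
divisor) iff `z ↦ Θ(z)Δ(z)*` belongs to `H^∞(𝕋, B(E))`. -/
theorem innerDiv_iff_theta_mul_adjoint_mem_Hinf (Θ Δ : ℂ → E →L[ℂ] E)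
    (hΘ : IsTwoSidedInner Θ) (hΔ : IsLeftInnerDiv Δ Θ) :
    (IsLeftInnerDiv Δ Θ ∧ IsRightInnerDiv Δ Θ) ↔
      MemHinf (fun z => (Θ z).comp (ContinuousLinearMap.adjoint (Δ z))) := by
  constructor
  · rintro ⟨-, -, B, hB, hBΔ⟩
    obtain ⟨⟨hΔmem, hΔae⟩, A, hA, hΘA⟩ := hΔ
    have key : ∀ᵐ z ∂mT, B z = (Θ z).comp (ContinuousLinearMap.adjoint (Δ z)) := by
      filter_upwards [hΔae, hΘ.2, hΘA, hBΔ] with z h3 h2 h4 h5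
      have hdd : (Δ z).comp (ContinuousLinearMap.adjoint (Δ z)) =
          ContinuousLinearMap.id ℂ E := by
        ext y
        have h2y : Θ z (ContinuousLinearMap.adjoint (Θ z) y) = y := by
          have := ContinuousLinearMap.ext_iff.mp h2 y
          simpa using this
        set w := A z (ContinuousLinearMap.adjoint (Θ z) y) with hw_def
        have hw : Δ z w = y := by
          rw [hw_def, ← ContinuousLinearMap.comp_apply, ← h4]; exact h2y
        have h3w : ContinuousLinearMap.adjoint (Δ z) (Δ z w) = w := by
          have := ContinuousLinearMap.ext_iff.mp h3 w
          simpa using this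
        simp only [ContinuousLinearMap.comp_apply, ContinuousLinearMap.id_apply]
        rw [← hw, h3w]
      calc B z = ((B z).comp (Δ z)).comp (ContinuousLinearMap.adjoint (Δ z)) := by
            rw [ContinuousLinearMap.comp_assoc, hdd, ContinuousLinearMap.comp_id]
        _ = (Θ z).comp (ContinuousLinearMap.adjoint (Δ z)) := by rw [← h5]
    exact memHinf_congr key hB
  · intro hmem
    refine ⟨hΔ, hΔ.1, fun z => (Θ z).comp (ContinuousLinearMap.adjoint (Δ z)), hmem, ?_⟩
    filter_upwards [hΔ.1.2] with z h3
    rw [ContinuousLinearMap.comp_assoc, h3, ContinuousLinearMap.comp_id]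

end
end

section
/- Let E be a complex Hilbert space and let A(z) = Σ_{n=0}^{N} A_n z^n be an operator-valued polynomial with coefficients A_n ∈ B(E) such that A_n and A_n* are partial isometries for each n = 0, 1, …, N and E = ⊕_{n=0}^{N} ran A_n = ⊕_{n=0}^{N} ran A_n* (orthogonal direct sums). Then A(z) = V ∏_{m=1}^{N} (z P_m + (I_E − P_m)), where P_m is the orthogonal projection of E onto ⊕_{n=m}^{N} ran A_n* and V is the constant unitary operator acting as A_n on ran A_n* (n = 0, …, N); in particular A is a finite Blaschke-Potapov product and an inner divisor of z^N I_E. -/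
open MeasureTheory Complex

noncomputable section

variable {D E E' : Type*}
  [NormedAddCommGroup D] [InnerProductSpace ℂ D] [CompleteSpace D]
  [NormedAddCommGroup E] [InnerProductSpace ℂ E] [CompleteSpace E]
  [NormedAddCommGroup E'] [InnerProductSpace ℂ E'] [CompleteSpace E']

set_option linter.unusedSectionVars false

section AuxMT

lemma measurable_circle_map : Measurable (fun t : ℝ => Complex.exp (t * Complex.I)) := by
  fun_prop

lemma mT_ae_norm : ∀ᵐ z ∂mT, ‖z‖ = 1 := by
  rw [mT, MeasureTheory.ae_map_iff measurable_circle_map.aemeasurable ((isClosed_eq continuous_norm continuous_const).measurableSet)]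
  filter_upwards with t
  simp [Complex.norm_exp_ofReal_mul_I]

instance : IsProbabilityMeasure mT := by
  constructor
  rw [mT, Measure.map_apply measurable_circle_map MeasurableSet.univ]
  simp only [Set.preimage_univ, Measure.smul_apply, Measure.restrict_apply MeasurableSet.univ,
    Set.univ_inter, Real.volume_Ioc, smul_eq_mul]
  rw [sub_zero, ENNReal.inv_mul_cancel]
  · simp [Real.pi_pos.le, Real.pi_ne_zero, Real.pi_pos]
  · exact ENNReal.ofReal_ne_top

lemma mT_integral_pow_eq_zero {k : ℕ} (hk : k ≠ 0) : ∫ z, z ^ k ∂mT = 0 := by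
  rw [mT]
  rw [integral_map measurable_circle_map.aemeasurable (by fun_prop)]
  rw [integral_smul_measure]
  have : ∀ t : ℝ, Complex.exp (t * Complex.I) ^ k = Complex.exp ((k * Complex.I) * t) := by
    intro t
    rw [← Complex.exp_nat_mul]; ring_nf
  simp only [this]
  rw [← intervalIntegral.integral_of_le (by positivity)]
  rw [integral_exp_mul_complex (by simp [hk, Complex.I_ne_zero])]
  have : Complex.exp ((k : ℂ) * Complex.I * (2 * Real.pi)) = 1 := by
    have := Complex.exp_int_mul_two_pi_mul_I (k : ℤ)
    push_cast at this ⊢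
    rw [← this]; ring_nf
  simp [this]

lemma mT_integrable_pow_smul {F : Type*} [NormedAddCommGroup F] [NormedSpace ℂ F]
    (k : ℕ) (v : F) : MeasureTheory.Integrable (fun z : ℂ => z ^ k • v) mT := by
  refine MeasureTheory.Integrable.mono' (MeasureTheory.integrable_const ‖v‖)
    (Continuous.aestronglyMeasurable (by fun_prop)) ?_
  filter_upwards [mT_ae_norm] with z hz
  rw [norm_smul, norm_pow, hz, one_pow, one_mul]

lemma mT_integral_pow_smul_eq_zero {F : Type*} [NormedAddCommGroup F] [NormedSpace ℂ F]
    [CompleteSpace F] {k : ℕ} (hk : k ≠ 0) (v : F) :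
    (∫ z, z ^ k • v ∂mT) = 0 := by
  rw [integral_smul_const, mT_integral_pow_eq_zero hk, zero_smul]

end AuxMT

section AuxOp
open ContinuousLinearMap

lemma mul_eq_zero_of_range_le (T S : E →L[ℂ] E)
    (h : LinearMap.range (S : E →ₗ[ℂ] E) ≤ (LinearMap.range (adjoint T : E →ₗ[ℂ] E))ᗮ) : T * S = 0 := by
  ext x
  show T (S x) = 0
  rw [← inner_self_eq_zero (𝕜 := ℂ)]
  rw [← adjoint_inner_right]
  exact (Submodule.mem_orthogonal' _ _).mp (h (LinearMap.mem_range_self (S : E →ₗ[ℂ] E) x)) _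
    (LinearMap.mem_range_self _ _)

lemma sum_proj_eq_one {ι : Type*} [Fintype ι] [DecidableEq ι] (Q : ι → E →L[ℂ] E)
    (hmul : ∀ i j, Q i * Q j = if i = j then Q i else 0)
    (hsup : (⨆ i, LinearMap.range (Q i : E →ₗ[ℂ] E)) = ⊤) : (∑ i, Q i) = 1 := by
  set S := ∑ i, Q i with hS
  have hQS : ∀ i, S * Q i = Q i := by
    intro i
    rw [hS, Finset.sum_mul,
      Finset.sum_eq_single i (fun j _ hj => by rw [hmul j i, if_neg hj]) (by simp),
      hmul i i, if_pos rfl]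
  have hfix : ∀ i (y : E), S (Q i y) = Q i y := by
    intro i y
    calc S (Q i y) = (S * Q i) y := rfl
    _ = Q i y := by rw [hQS i]
  have hSS : S * S = S := by
    conv_lhs => rw [hS, Finset.mul_sum]
    simp only [← hS, hQS]
  have hrange : ∀ x : E, S x = x := by
    have htop : (⊤ : Submodule ℂ E) ≤ LinearMap.range (S : E →ₗ[ℂ] E) := by
      rw [← hsup]
      refine iSup_le fun i => ?_
      rintro x ⟨y, rfl⟩
      exact ⟨Q i y, hfix i y⟩
    intro x
    obtain ⟨y, hy⟩ := htop (Submodule.mem_top (x := x))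
    calc S x = S (S y) := by rw [← hy]; rfl
    _ = (S * S) y := rfl
    _ = S y := by rw [hSS]
    _ = x := hy
  ext x; simpa using hrange x

lemma listofFn_prod_apply {M : ℕ} (f : Fin M → E →L[ℂ] E) (c : Fin M → ℂ) (x : E)
    (h : ∀ i, f i x = c i • x) : (List.ofFn f).prod x = (∏ i, c i) • x := by
  induction M with
  | zero => simp
  | succ M ih =>
    rw [List.ofFn_succ, List.prod_cons, Fin.prod_univ_succ]
    show f 0 ((List.ofFn fun i : Fin M => f i.succ).prod x) = _
    rw [ih (fun i => f i.succ) (fun i => c i.succ) (fun i => h i.succ),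
      (f 0).map_smul, h 0, smul_smul, mul_comm]

lemma card_filter_lt {N : ℕ} (j : ℕ) (hj : j ≤ N) :
    (Finset.univ.filter fun m : Fin N => (m : ℕ) < j).card = j := by
  apply Finset.card_eq_of_bijective (fun i hi => (⟨i, lt_of_lt_of_le hi hj⟩ : Fin N))
  · intro a ha
    simp only [Finset.mem_filter] at ha
    exact ⟨a, ha.2, rfl⟩
  · intro i hi
    simp [hi]
  · intro i j hi hj hij
    simpa [Fin.ext_iff] using hij

lemma prod_ite_pow {N : ℕ} (j : Fin (N + 1)) (z : ℂ) :
    (∏ m : Fin N, (if (m : ℕ) + 1 ≤ (j : ℕ) then z else 1)) = z ^ (j : ℕ) := by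
  rw [Finset.prod_ite _ _]
  simp only [Finset.prod_const, Finset.prod_const_one, mul_one]
  have h : (Finset.univ.filter fun m : Fin N => (m : ℕ) + 1 ≤ (j : ℕ))
      = (Finset.univ.filter fun m : Fin N => (m : ℕ) < (j : ℕ)) := by
    ext m; simp only [Finset.mem_filter, Finset.mem_univ, true_and]; omega
  rw [h, card_filter_lt _ (Nat.lt_succ_iff.mp j.isLt), one_pow, mul_one]


lemma memHinf_poly (M : ℕ) (T : Fin M → E →L[ℂ] E) (e : Fin M → ℕ) :
    MemHinf (fun z : ℂ => ∑ n, z ^ (e n) • T n) := by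
  constructor
  · intro x
    apply Continuous.aestronglyMeasurable
    have h : (fun z : ℂ => (∑ n, z ^ (e n) • T n) x) = fun z : ℂ => ∑ n, z ^ (e n) • T n x := by
      funext z
      simp [ContinuousLinearMap.sum_apply, ContinuousLinearMap.smul_apply]
    rw [h]
    exact continuous_finset_sum _ fun n _ => (continuous_pow (e n)).smul continuous_const
  · refine ⟨∑ n, ‖T n‖, ?_⟩
    filter_upwards [mT_ae_norm] with z hz
    calc ‖∑ n, z ^ (e n) • T n‖ ≤ ∑ n, ‖z ^ (e n) • T n‖ := norm_sum_le _ _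
    _ = ∑ n, ‖T n‖ := Finset.sum_congr rfl fun n _ => by
        rw [norm_smul, norm_pow, hz, one_pow, one_mul]
  · intro n hn x
    simp only [fc]
    set k := (-n).toNat with hk
    have hae : ∀ᵐ z ∂mT, ((starRingEnd ℂ) z) ^ n • ((∑ m, z ^ (e m) • T m) x)
        = ∑ m, z ^ (k + e m) • (T m x) := by
      filter_upwards [mT_ae_norm] with z hz
      have hcon : ((starRingEnd ℂ) z) ^ n = z ^ k := by
        rw [← Complex.inv_eq_conj hz, inv_zpow, ← zpow_neg,
          show -n = (k : ℤ) from by omega, zpow_natCast]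
      simp only [ContinuousLinearMap.sum_apply, ContinuousLinearMap.smul_apply, hcon,
        Finset.smul_sum, smul_smul, ← pow_add]
    rw [MeasureTheory.integral_congr_ae hae,
      MeasureTheory.integral_finset_sum _ (fun m _ => mT_integrable_pow_smul (k + e m) (T m x))]
    exact Finset.sum_eq_zero fun m _ => mT_integral_pow_smul_eq_zero (by omega) (T m x)

end AuxOp

open ContinuousLinearMap

set_option maxHeartbeats 2000000 in
/-- Let `A(z) = Σ_{n=0}^{N} Aₙ zⁿ` be an operator-valued polynomial whose
coefficients `Aₙ` and `Aₙ*` are partial isometries with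
`E = ⊕ₙ ran Aₙ = ⊕ₙ ran Aₙ*`. Then `A(z) = V ∏_{m=1}^{N}(z Pₘ + (I - Pₘ))` where `Pₘ` is
the orthogonal projection onto `⊕_{n=m}^{N} ran Aₙ*` and `V` is the constant unitary acting
as `Aₙ` on `ran Aₙ*`; in particular `A` is a finite Blaschke-Potapov product and an inner
divisor of `z^N I_E`. -/
theorem polynomial_with_partialIsometry_coeffs_is_BPProduct (N : ℕ)
    (C : Fin (N + 1) → E →L[ℂ] E)
    (hpi : ∀ n, IsPartialIsom (C n) ∧ IsPartialIsom (ContinuousLinearMap.adjoint (C n)))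
    (horth : ∀ i j, i ≠ j → LinearMap.range (C i : E →ₗ[ℂ] E) ≤ (LinearMap.range (C j : E →ₗ[ℂ] E))ᗮ)
    (hsup : (⨆ n, LinearMap.range (C n : E →ₗ[ℂ] E)) = ⊤)
    (horth' : ∀ i j, i ≠ j →
      LinearMap.range (ContinuousLinearMap.adjoint (C i) : E →ₗ[ℂ] E) ≤
        (LinearMap.range (ContinuousLinearMap.adjoint (C j) : E →ₗ[ℂ] E))ᗮ)
    (hsup' : (⨆ n, LinearMap.range (ContinuousLinearMap.adjoint (C n) : E →ₗ[ℂ] E)) = ⊤) :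
    ∃ (V : E →L[ℂ] E) (P : Fin N → E →L[ℂ] E),
      IsUnitaryOp V ∧
      (∀ n : Fin (N + 1), ∀ y ∈ LinearMap.range (ContinuousLinearMap.adjoint (C n) : E →ₗ[ℂ] E),
        V y = C n y) ∧
      (∀ m : Fin N, IsOrthoProj (P m) ∧
        LinearMap.range (P m : E →ₗ[ℂ] E) =
          ⨆ (n : Fin (N + 1)) (_ : (m : ℕ) + 1 ≤ (n : ℕ)),
            LinearMap.range (ContinuousLinearMap.adjoint (C n) : E →ₗ[ℂ] E)) ∧
      (∀ z : ℂ, (∑ n : Fin (N + 1), z ^ (n : ℕ) • C n) =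
        V * (List.ofFn fun m : Fin N => z • P m + (1 - P m)).prod) ∧
      IsInnerDiv (fun z => ∑ n : Fin (N + 1), z ^ (n : ℕ) • C n)
        (fun z => z ^ N • (1 : E →L[ℂ] E)) := by

  have hCC : ∀ n, C n * (adjoint (C n) * C n) = C n := by
    intro n
    have h := (hpi n).1
    rw [IsPartialIsom] at h
    rw [← mul_assoc]
    exact h
  have hCC' : ∀ n, adjoint (C n) * (C n * adjoint (C n)) = adjoint (C n) := by
    intro n
    have h := (hpi n).2
    rw [IsPartialIsom, adjoint_adjoint] at h
    rw [← mul_assoc]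
    exact h
  have hker : ∀ n m, n ≠ m → C n * adjoint (C m) = 0 :=
    fun n m h => mul_eq_zero_of_range_le _ _ (horth' m n (Ne.symm h))
  have hker' : ∀ n m, n ≠ m → adjoint (C n) * C m = 0 := by
    intro n m h
    refine mul_eq_zero_of_range_le _ _ ?_
    rw [adjoint_adjoint]
    exact horth m n (Ne.symm h)
  set Q : Fin (N + 1) → E →L[ℂ] E := fun n => adjoint (C n) * C n with hQdef
  set R : Fin (N + 1) → E →L[ℂ] E := fun n => C n * adjoint (C n) with hRdef
  have hQmul : ∀ i j, Q i * Q j = if i = j then Q i else 0 := by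
    intro i j
    by_cases h : i = j
    · subst h
      rw [if_pos rfl]
      simp only [hQdef]
      rw [mul_assoc, hCC i]
    · rw [if_neg h]
      simp only [hQdef]
      rw [mul_assoc, ← mul_assoc (C i), hker i j h, zero_mul, mul_zero]
  have hRmul : ∀ i j, R i * R j = if i = j then R i else 0 := by
    intro i j
    by_cases h : i = j
    · subst h
      rw [if_pos rfl]
      simp only [hRdef]
      rw [mul_assoc, hCC' i]
    · rw [if_neg h]
      simp only [hRdef]
      rw [mul_assoc, ← mul_assoc (adjoint (C i)), hker' i j h, zero_mul, mul_zero]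
  have hQrange : ∀ n, LinearMap.range (Q n : E →ₗ[ℂ] E) = LinearMap.range (adjoint (C n) : E →ₗ[ℂ] E) := by
    intro n
    apply le_antisymm
    · rintro x ⟨y, rfl⟩
      exact ⟨C n y, rfl⟩
    · rintro x ⟨y, rfl⟩
      exact ⟨adjoint (C n) y, DFunLike.congr_fun (hCC' n) y⟩
  have hRrange : ∀ n, LinearMap.range (R n : E →ₗ[ℂ] E) = LinearMap.range (C n : E →ₗ[ℂ] E) := by
    intro n
    apply le_antisymm
    · rintro x ⟨y, rfl⟩
      exact ⟨adjoint (C n) y, rfl⟩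
    · rintro x ⟨y, rfl⟩
      exact ⟨C n y, DFunLike.congr_fun (hCC n) y⟩
  have hQsup : (⨆ n, LinearMap.range (Q n : E →ₗ[ℂ] E)) = ⊤ := by
    simp only [hQrange]; exact hsup'
  have hRsup : (⨆ n, LinearMap.range (R n : E →ₗ[ℂ] E)) = ⊤ := by
    simp only [hRrange]; exact hsup
  have hQsum : (∑ n, Q n) = 1 := sum_proj_eq_one Q hQmul hQsup
  have hRsum : (∑ n, R n) = 1 := sum_proj_eq_one R hRmul hRsup
  have hQadj : ∀ n, adjoint (Q n) = Q n := by
    intro n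
    simp only [hQdef]
    rw [mul_def, adjoint_comp, adjoint_adjoint, ← mul_def]
  set V : E →L[ℂ] E := ∑ n, C n with hVdef
  have hadjV : adjoint V = ∑ n, adjoint (C n) := by
    rw [hVdef]
    exact map_sum adjoint C Finset.univ
  have hVQ : ∀ j, V * Q j = C j := by
    intro j
    rw [hVdef, Finset.sum_mul]
    rw [Finset.sum_eq_single j
      (fun n _ hn => by simp only [hQdef]; rw [← mul_assoc, hker n j hn, zero_mul]) (by simp)]
    simp only [hQdef]
    exact hCC j
  have hVunit : IsUnitaryOp V := by
    constructor
    · show adjoint V * V = 1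
      rw [hadjV, hVdef, Finset.sum_mul_sum]
      calc ∑ n, ∑ m, adjoint (C n) * C m
          = ∑ n, Q n := Finset.sum_congr rfl fun n _ => by
            rw [Finset.sum_eq_single n (fun m _ hm => hker' n m (Ne.symm hm)) (by simp)]
        _ = 1 := hQsum
    · show V * adjoint V = 1
      rw [hadjV, hVdef, Finset.sum_mul_sum]
      calc ∑ n, ∑ m, C n * adjoint (C m)
          = ∑ n, R n := Finset.sum_congr rfl fun n _ => by
            rw [Finset.sum_eq_single n (fun m _ hm => hker n m (Ne.symm hm)) (by simp)]
        _ = 1 := hRsum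
  have hVact : ∀ n : Fin (N + 1), ∀ y ∈ LinearMap.range (adjoint (C n) : E →ₗ[ℂ] E), V y = C n y := by
    intro n y hy
    obtain ⟨x, rfl⟩ := hy
    have h1 : V * adjoint (C n) = C n * adjoint (C n) := by
      rw [hVdef, Finset.sum_mul]
      exact Finset.sum_eq_single n (fun k _ hk => hker k n hk) (by simp)
    calc V (adjoint (C n) x) = (V * adjoint (C n)) x := rfl
    _ = (C n * adjoint (C n)) x := by rw [h1]
    _ = C n (adjoint (C n) x) := rfl
  set P : Fin N → E →L[ℂ] E := fun m =>
    ∑ n ∈ Finset.univ.filter (fun n : Fin (N + 1) => (m : ℕ) + 1 ≤ (n : ℕ)), Q n with hPdef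
  have hPm : ∀ m : Fin N, P m =
      ∑ n ∈ Finset.univ.filter (fun n : Fin (N + 1) => (m : ℕ) + 1 ≤ (n : ℕ)), Q n :=
    fun m => rfl
  have hPQ : ∀ (m : Fin N) (j : Fin (N + 1)),
      P m * Q j = if (m : ℕ) + 1 ≤ (j : ℕ) then Q j else 0 := by
    intro m j
    calc P m * Q j
        = ∑ n ∈ Finset.univ.filter (fun n : Fin (N + 1) => (m : ℕ) + 1 ≤ (n : ℕ)), Q n * Q j := by
          rw [hPm m, Finset.sum_mul]
      _ = ∑ n ∈ Finset.univ.filter (fun n : Fin (N + 1) => (m : ℕ) + 1 ≤ (n : ℕ)),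
            (if n = j then Q n else 0) := Finset.sum_congr rfl fun n _ => hQmul n j
      _ = if j ∈ Finset.univ.filter (fun n : Fin (N + 1) => (m : ℕ) + 1 ≤ (n : ℕ)) then Q j
            else 0 := Finset.sum_ite_eq' _ _ _
      _ = if (m : ℕ) + 1 ≤ (j : ℕ) then Q j else 0 := by simp [Finset.mem_filter]
  have hPproj : ∀ m, IsOrthoProj (P m) := by
    intro m
    constructor
    · show P m * P m = P m
      calc P m * P m
          = ∑ n ∈ Finset.univ.filter (fun n : Fin (N + 1) => (m : ℕ) + 1 ≤ (n : ℕ)),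
              ∑ k ∈ Finset.univ.filter (fun n : Fin (N + 1) => (m : ℕ) + 1 ≤ (n : ℕ)),
                Q n * Q k := by rw [hPm m, Finset.sum_mul_sum]
        _ = ∑ n ∈ Finset.univ.filter (fun n : Fin (N + 1) => (m : ℕ) + 1 ≤ (n : ℕ)), Q n := by
            refine Finset.sum_congr rfl fun n hn => ?_
            calc ∑ k ∈ Finset.univ.filter (fun n : Fin (N + 1) => (m : ℕ) + 1 ≤ (n : ℕ)),
                  Q n * Q k
                = ∑ k ∈ Finset.univ.filter (fun n : Fin (N + 1) => (m : ℕ) + 1 ≤ (n : ℕ)),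
                    (if n = k then Q n else 0) := Finset.sum_congr rfl fun k _ => hQmul n k
              _ = if n ∈ Finset.univ.filter (fun n : Fin (N + 1) => (m : ℕ) + 1 ≤ (n : ℕ))
                    then Q n else 0 := Finset.sum_ite_eq _ n (fun _ => Q n)
              _ = Q n := if_pos hn
        _ = P m := (hPm m).symm
    · show adjoint (P m) = P m
      rw [hPm m, map_sum adjoint Q _]
      exact Finset.sum_congr rfl fun n _ => hQadj n
  have hPrange : ∀ m : Fin N, LinearMap.range (P m : E →ₗ[ℂ] E) =
      ⨆ (n : Fin (N + 1)) (_ : (m : ℕ) + 1 ≤ (n : ℕ)),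
        LinearMap.range (adjoint (C n) : E →ₗ[ℂ] E) := by
    intro m
    apply le_antisymm
    · rintro x ⟨y, rfl⟩
      have hx : P m y
          = ∑ n ∈ Finset.univ.filter (fun n : Fin (N + 1) => (m : ℕ) + 1 ≤ (n : ℕ)), Q n y := by
        rw [hPm m]
        exact ContinuousLinearMap.sum_apply _ _ _
      change P m y ∈ _
      rw [hx]
      refine Submodule.sum_mem _ fun n hn => ?_
      have hn' := (Finset.mem_filter.mp hn).2
      refine Submodule.mem_iSup_of_mem n (Submodule.mem_iSup_of_mem hn' ?_)
      have hmem := LinearMap.mem_range_self (Q n : E →ₗ[ℂ] E) y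
      rw [hQrange n] at hmem
      exact hmem
    · refine iSup₂_le fun n hn => ?_
      rw [← hQrange n]
      rintro x ⟨y, rfl⟩
      refine ⟨Q n y, ?_⟩
      calc P m (Q n y) = (P m * Q n) y := rfl
      _ = Q n y := by rw [hPQ m n, if_pos hn]
  have hprod : ∀ z : ℂ,
      (List.ofFn fun m : Fin N => z • P m + (1 - P m)).prod
        = ∑ j : Fin (N + 1), z ^ (j : ℕ) • Q j := by
    intro z
    ext y
    have h1 : ∀ j : Fin (N + 1),
        (List.ofFn fun m : Fin N => z • P m + (1 - P m)).prod (Q j y)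
          = z ^ (j : ℕ) • Q j y := by
      intro j
      refine (listofFn_prod_apply _ (fun m => if (m : ℕ) + 1 ≤ (j : ℕ) then z else 1) _
        fun m => ?_).trans (by rw [prod_ite_pow])
      have hP : P m (Q j y) = if (m : ℕ) + 1 ≤ (j : ℕ) then Q j y else 0 := by
        calc P m (Q j y) = (P m * Q j) y := rfl
        _ = _ := by
            rw [hPQ m j, apply_ite (fun T : E →L[ℂ] E => T y)]
            simp
      rw [ContinuousLinearMap.add_apply, ContinuousLinearMap.smul_apply,
        ContinuousLinearMap.sub_apply, ContinuousLinearMap.one_apply, hP]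
      split_ifs with h <;> simp [h]
    calc (List.ofFn fun m : Fin N => z • P m + (1 - P m)).prod y
        = (List.ofFn fun m : Fin N => z • P m + (1 - P m)).prod ((∑ j : Fin (N + 1), Q j) y) := by
          rw [hQsum, ContinuousLinearMap.one_apply]
      _ = (List.ofFn fun m : Fin N => z • P m + (1 - P m)).prod (∑ j : Fin (N + 1), Q j y) := by
          rw [ContinuousLinearMap.sum_apply]
      _ = ∑ j : Fin (N + 1), (List.ofFn fun m : Fin N => z • P m + (1 - P m)).prod (Q j y) :=
          map_sum _ _ _
      _ = ∑ j : Fin (N + 1), z ^ (j : ℕ) • Q j y := Finset.sum_congr rfl fun j _ => h1 j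
      _ = (∑ j : Fin (N + 1), z ^ (j : ℕ) • Q j) y := by
          rw [ContinuousLinearMap.sum_apply]
          exact Finset.sum_congr rfl fun j _ => rfl
  have hmain : ∀ z : ℂ, (∑ n : Fin (N + 1), z ^ (n : ℕ) • C n)
      = V * (List.ofFn fun m : Fin N => z • P m + (1 - P m)).prod := by
    intro z
    rw [hprod z, Finset.mul_sum]
    exact Finset.sum_congr rfl fun j _ => by rw [mul_smul_comm, hVQ j]
  have hABz : ∀ z : ℂ, (∑ n : Fin (N + 1), z ^ (n : ℕ) • C n)
      * (∑ n : Fin (N + 1), z ^ (N - (n : ℕ)) • adjoint (C n)) = z ^ N • 1 := by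
    intro z
    rw [Finset.sum_mul_sum]
    have hrow : ∀ n : Fin (N + 1),
        (∑ m : Fin (N + 1), (z ^ (n : ℕ) • C n) * (z ^ (N - (m : ℕ)) • adjoint (C m)))
          = z ^ N • R n := by
      intro n
      rw [Finset.sum_eq_single n
        (fun m _ hm => by rw [smul_mul_smul_comm, hker n m (Ne.symm hm), smul_zero]) (by simp)]
      rw [smul_mul_smul_comm, ← pow_add,
        Nat.add_sub_cancel' (Nat.lt_succ_iff.mp n.isLt)]
    rw [Finset.sum_congr rfl fun n _ => hrow n, ← Finset.smul_sum, hRsum]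
  have hBAz : ∀ z : ℂ, (∑ n : Fin (N + 1), z ^ (N - (n : ℕ)) • adjoint (C n))
      * (∑ n : Fin (N + 1), z ^ (n : ℕ) • C n) = z ^ N • 1 := by
    intro z
    rw [Finset.sum_mul_sum]
    have hrow : ∀ n : Fin (N + 1),
        (∑ m : Fin (N + 1), (z ^ (N - (n : ℕ)) • adjoint (C n)) * (z ^ (m : ℕ) • C m))
          = z ^ N • Q n := by
      intro n
      rw [Finset.sum_eq_single n
        (fun m _ hm => by rw [smul_mul_smul_comm, hker' n m (Ne.symm hm), smul_zero]) (by simp)]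
      rw [smul_mul_smul_comm, ← pow_add,
        Nat.sub_add_cancel (Nat.lt_succ_iff.mp n.isLt)]
    rw [Finset.sum_congr rfl fun n _ => hrow n, ← Finset.smul_sum, hQsum]
  have hAadj : ∀ z : ℂ, adjoint (∑ n : Fin (N + 1), z ^ (n : ℕ) • C n)
      = ∑ n : Fin (N + 1), ((starRingEnd ℂ) z) ^ (n : ℕ) • adjoint (C n) := by
    intro z
    rw [map_sum adjoint _ Finset.univ]
    refine Finset.sum_congr rfl fun n _ => ?_
    rw [LinearIsometryEquiv.map_smulₛₗ, map_pow]
  have hAinner : IsInnerFn (fun z : ℂ => ∑ n : Fin (N + 1), z ^ (n : ℕ) • C n) := by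
    refine ⟨memHinf_poly _ _ _, ?_⟩
    filter_upwards [mT_ae_norm] with z hz
    show adjoint (∑ n : Fin (N + 1), z ^ (n : ℕ) • C n)
      * (∑ n : Fin (N + 1), z ^ (n : ℕ) • C n) = 1
    rw [hAadj z, Finset.sum_mul_sum]
    have hz1 : (starRingEnd ℂ) z * z = 1 := by
      have h2 : Complex.normSq z = 1 := by
        rw [Complex.normSq_eq_norm_sq, hz, one_pow]
      rw [← Complex.normSq_eq_conj_mul_self, h2, Complex.ofReal_one]
    have hrow : ∀ n : Fin (N + 1),
        (∑ m : Fin (N + 1),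
          (((starRingEnd ℂ) z) ^ (n : ℕ) • adjoint (C n)) * (z ^ (m : ℕ) • C m)) = Q n := by
      intro n
      rw [Finset.sum_eq_single n
        (fun m _ hm => by rw [smul_mul_smul_comm, hker' n m (Ne.symm hm), smul_zero]) (by simp)]
      rw [smul_mul_smul_comm, ← mul_pow, hz1, one_pow, one_smul]
    rw [Finset.sum_congr rfl fun n _ => hrow n, hQsum]
  refine ⟨V, P, hVunit, hVact, fun m => ⟨hPproj m, hPrange m⟩, hmain, ?_, ?_⟩
  · refine ⟨hAinner, fun z : ℂ => ∑ n : Fin (N + 1), z ^ (N - (n : ℕ)) • adjoint (C n),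
      memHinf_poly _ _ _, MeasureTheory.ae_of_all _ fun z => ?_⟩
    show z ^ N • (1 : E →L[ℂ] E) = (∑ n : Fin (N + 1), z ^ (n : ℕ) • C n)
      * (∑ n : Fin (N + 1), z ^ (N - (n : ℕ)) • adjoint (C n))
    exact (hABz z).symm
  · refine ⟨hAinner, fun z : ℂ => ∑ n : Fin (N + 1), z ^ (N - (n : ℕ)) • adjoint (C n),
      memHinf_poly _ _ _, MeasureTheory.ae_of_all _ fun z => ?_⟩
    show z ^ N • (1 : E →L[ℂ] E) = (∑ n : Fin (N + 1), z ^ (N - (n : ℕ)) • adjoint (C n))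
      * (∑ n : Fin (N + 1), z ^ (n : ℕ) • C n)
    exact (hBAz z).symm


end
end
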